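/- Let Ω = (−10,10) and ω = (−2,−1) ∪ (1,2). For all real numbers a, b with −2 < a ≤ b < 2 there exists a constant C > 0 such that every classical solution u of the one-dimensional wave equation on [0,3]×[−10,10] with Dirichlet boundary conditions satisfies ∫_a^b ( (∂ₓu(0,x))² + (∂ₜu(0,x))² ) dx ≤ C ∫_0^3 ∫_ω ( (∂ₜu(t,x))² + (∂ₓu(t,x))² ) dx dt, with no restriction on the support of the initial data. -/

import Mathlib

open MeasureTheory
open Set

/-- Partial derivative in time of a function of (time, space). -/
noncomputable def pdt (u : ℝ → ℝ → ℝ) : ℝ → ℝ → ℝ := fun t x => deriv (fun s => u s x) t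

/-- Partial derivative in space of a function of (time, space). -/
noncomputable def pdx (u : ℝ → ℝ → ℝ) : ℝ → ℝ → ℝ := fun t x => deriv (fun y => u t y) x

namespace WaveAux

def wbox : Set (ℝ × ℝ) := Set.Icc (0:ℝ) 3 ×ˢ Set.Icc (-10:ℝ) 10

lemma wbox_uniqueDiff : UniqueDiffOn ℝ wbox :=
  (uniqueDiffOn_Icc (by norm_num)).prod (uniqueDiffOn_Icc (by norm_num))

lemma interior_wbox : interior wbox = Set.Ioo (0:ℝ) 3 ×ˢ Set.Ioo (-10:ℝ) 10 := by
  rw [wbox, interior_prod_eq, interior_Icc, interior_Icc]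

variable (u : ℝ → ℝ → ℝ)

noncomputable def F1 : ℝ × ℝ → ℝ := fun p => fderivWithin ℝ (Function.uncurry u) wbox p (1,0)
noncomputable def F2 : ℝ × ℝ → ℝ := fun p => fderivWithin ℝ (Function.uncurry u) wbox p (0,1)

variable {u}

lemma contDiffOn_fderivWithin (hu : ContDiffOn ℝ 2 (Function.uncurry u) wbox) :
    ContDiffOn ℝ 1 (fderivWithin ℝ (Function.uncurry u) wbox) wbox :=
  hu.fderivWithin wbox_uniqueDiff (by norm_num)

lemma contF1 (hu : ContDiffOn ℝ 2 (Function.uncurry u) wbox) : ContinuousOn (F1 u) wbox := by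
  have h := (contDiffOn_fderivWithin hu).continuousOn
  exact (ContinuousLinearMap.apply ℝ ℝ ((1:ℝ),(0:ℝ))).continuous.comp_continuousOn h

lemma contF2 (hu : ContDiffOn ℝ 2 (Function.uncurry u) wbox) : ContinuousOn (F2 u) wbox := by
  have h := (contDiffOn_fderivWithin hu).continuousOn
  exact (ContinuousLinearMap.apply ℝ ℝ ((0:ℝ),(1:ℝ))).continuous.comp_continuousOn h

-- at interior points, within-fderiv = fderiv
lemma F1_eq_interior {p : ℝ × ℝ} (hp : p ∈ interior wbox) :
    F1 u p = fderiv ℝ (Function.uncurry u) p (1,0) := by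
  rw [F1, fderivWithin_of_mem_nhds (mem_interior_iff_mem_nhds.1 hp)]

lemma F2_eq_interior {p : ℝ × ℝ} (hp : p ∈ interior wbox) :
    F2 u p = fderiv ℝ (Function.uncurry u) p (0,1) := by
  rw [F2, fderivWithin_of_mem_nhds (mem_interior_iff_mem_nhds.1 hp)]

lemma contDiffAt_interior (hu : ContDiffOn ℝ 2 (Function.uncurry u) wbox) {p : ℝ × ℝ} (hp : p ∈ interior wbox) :
    ContDiffAt ℝ 2 (Function.uncurry u) p :=
  hu.contDiffAt (mem_interior_iff_mem_nhds.1 hp)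

-- slice derivatives at interior points
lemma hasDerivAt_slice_t (hu : ContDiffOn ℝ 2 (Function.uncurry u) wbox) {p : ℝ × ℝ} (hp : p ∈ interior wbox) :
    HasDerivAt (fun s => u s p.2) (fderiv ℝ (Function.uncurry u) p (1,0)) p.1 := by
  have hd : HasFDerivAt (Function.uncurry u) (fderiv ℝ (Function.uncurry u) p) p :=
    ((contDiffAt_interior hu hp).differentiableAt (by norm_num)).hasFDerivAt
  have hline : HasDerivAt (fun s : ℝ => ((s, p.2) : ℝ × ℝ)) ((1:ℝ),(0:ℝ)) p.1 := by
    have h1 : HasDerivAt (fun s : ℝ => s) 1 p.1 := hasDerivAt_id p.1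
    exact h1.prodMk (hasDerivAt_const p.1 p.2)
  have := hd.comp_hasDerivAt p.1 (by simpa using hline)
  simpa [Function.comp_def] using this

lemma hasDerivAt_slice_x (hu : ContDiffOn ℝ 2 (Function.uncurry u) wbox) {p : ℝ × ℝ} (hp : p ∈ interior wbox) :
    HasDerivAt (fun y => u p.1 y) (fderiv ℝ (Function.uncurry u) p (0,1)) p.2 := by
  have hd : HasFDerivAt (Function.uncurry u) (fderiv ℝ (Function.uncurry u) p) p :=
    ((contDiffAt_interior hu hp).differentiableAt (by norm_num)).hasFDerivAt
  have hline : HasDerivAt (fun y : ℝ => ((p.1, y) : ℝ × ℝ)) ((0:ℝ),(1:ℝ)) p.2 :=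
    (hasDerivAt_const p.2 p.1).prodMk (hasDerivAt_id p.2)
  have := hd.comp_hasDerivAt p.2 (by simpa using hline)
  simpa [Function.comp_def] using this

lemma pdt_eq_interior (hu : ContDiffOn ℝ 2 (Function.uncurry u) wbox) {p : ℝ × ℝ} (hp : p ∈ interior wbox) :
    pdt u p.1 p.2 = F1 u p := by
  rw [F1_eq_interior hp]
  exact (hasDerivAt_slice_t hu hp).deriv

lemma pdx_eq_interior (hu : ContDiffOn ℝ 2 (Function.uncurry u) wbox) {p : ℝ × ℝ} (hp : p ∈ interior wbox) :
    pdx u p.1 p.2 = F2 u p := by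
  rw [F2_eq_interior hp]
  exact (hasDerivAt_slice_x hu hp).deriv


noncomputable def g1 (u : ℝ → ℝ → ℝ) : ℝ × ℝ → ℝ := fun p => fderiv ℝ (Function.uncurry u) p (1,0)
noncomputable def g2 (u : ℝ → ℝ → ℝ) : ℝ × ℝ → ℝ := fun p => fderiv ℝ (Function.uncurry u) p (0,1)

lemma F1_eq_g1 {p : ℝ × ℝ} (hp : p ∈ interior wbox) : F1 u p = g1 u p := F1_eq_interior hp
lemma F2_eq_g2 {p : ℝ × ℝ} (hp : p ∈ interior wbox) : F2 u p = g2 u p := F2_eq_interior hp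

lemma hasFDerivAt_g1 (hu : ContDiffOn ℝ 2 (Function.uncurry u) wbox) {p : ℝ × ℝ}
    (hp : p ∈ interior wbox) :
    HasFDerivAt (g1 u) ((ContinuousLinearMap.apply ℝ ℝ ((1:ℝ),(0:ℝ))).comp
      (fderiv ℝ (fderiv ℝ (Function.uncurry u)) p)) p := by
  have h2 : ContDiffAt ℝ 1 (fderiv ℝ (Function.uncurry u)) p :=
    (contDiffAt_interior hu hp).fderiv_right (by norm_num)
  have hΦ : HasFDerivAt (fderiv ℝ (Function.uncurry u))
      (fderiv ℝ (fderiv ℝ (Function.uncurry u)) p) p :=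
    (h2.differentiableAt (by norm_num)).hasFDerivAt
  exact (ContinuousLinearMap.apply ℝ ℝ ((1:ℝ),(0:ℝ))).hasFDerivAt.comp p hΦ

lemma hasFDerivAt_g2 (hu : ContDiffOn ℝ 2 (Function.uncurry u) wbox) {p : ℝ × ℝ}
    (hp : p ∈ interior wbox) :
    HasFDerivAt (g2 u) ((ContinuousLinearMap.apply ℝ ℝ ((0:ℝ),(1:ℝ))).comp
      (fderiv ℝ (fderiv ℝ (Function.uncurry u)) p)) p := by
  have h2 : ContDiffAt ℝ 1 (fderiv ℝ (Function.uncurry u)) p :=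
    (contDiffAt_interior hu hp).fderiv_right (by norm_num)
  have hΦ : HasFDerivAt (fderiv ℝ (Function.uncurry u))
      (fderiv ℝ (fderiv ℝ (Function.uncurry u)) p) p :=
    (h2.differentiableAt (by norm_num)).hasFDerivAt
  exact (ContinuousLinearMap.apply ℝ ℝ ((0:ℝ),(1:ℝ))).hasFDerivAt.comp p hΦ

lemma pdt_eventually_eq_g1 (hu : ContDiffOn ℝ 2 (Function.uncurry u) wbox) {p : ℝ × ℝ}
    (hp : p ∈ interior wbox) :
    ∀ᶠ s in nhds p.1, pdt u s p.2 = g1 u (s, p.2) := by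
  have hcont : Continuous (fun s : ℝ => ((s, p.2) : ℝ × ℝ)) := by fun_prop
  have : ∀ᶠ s in nhds p.1, ((s, p.2) : ℝ × ℝ) ∈ interior wbox := by
    have := hcont.continuousAt (x := p.1) |>.preimage_mem_nhds
      (isOpen_interior.mem_nhds (by simpa using hp))
    exact this
  filter_upwards [this] with s hs
  have := pdt_eq_interior hu hs
  simpa [F1_eq_g1 hs] using this

lemma pdx_eventually_eq_g2 (hu : ContDiffOn ℝ 2 (Function.uncurry u) wbox) {p : ℝ × ℝ}
    (hp : p ∈ interior wbox) :
    ∀ᶠ y in nhds p.2, pdx u p.1 y = g2 u (p.1, y) := by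
  have hcont : Continuous (fun y : ℝ => ((p.1, y) : ℝ × ℝ)) := by fun_prop
  have : ∀ᶠ y in nhds p.2, ((p.1, y) : ℝ × ℝ) ∈ interior wbox := by
    have := hcont.continuousAt (x := p.2) |>.preimage_mem_nhds
      (isOpen_interior.mem_nhds (by simpa using hp))
    exact this
  filter_upwards [this] with y hy
  have := pdx_eq_interior hu hy
  simpa [F2_eq_g2 hy] using this

lemma wave_interior (hu : ContDiffOn ℝ 2 (Function.uncurry u) wbox)
    (hwave : ∀ t ∈ Set.Icc (0 : ℝ) 3, ∀ x ∈ Set.Icc (-10 : ℝ) 10,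
      pdt (pdt u) t x = pdx (pdx u) t x)
    {p : ℝ × ℝ} (hp : p ∈ interior wbox) :
    fderiv ℝ (fderiv ℝ (Function.uncurry u)) p (1,0) (1,0) =
      fderiv ℝ (fderiv ℝ (Function.uncurry u)) p (0,1) (0,1) := by
  have hpw : p ∈ wbox := interior_subset hp
  obtain ⟨hp1, hp2⟩ := hpw
  have hw := hwave p.1 hp1 p.2 hp2
  -- left side
  have hline1 : HasDerivAt (fun s : ℝ => ((s, p.2) : ℝ × ℝ)) ((1:ℝ),(0:ℝ)) p.1 :=
    (hasDerivAt_id p.1).prodMk (hasDerivAt_const p.1 p.2)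
  have hg1d : HasDerivAt (fun s : ℝ => g1 u (s, p.2))
      (fderiv ℝ (fderiv ℝ (Function.uncurry u)) p (1,0) (1,0)) p.1 := by
    have := (hasFDerivAt_g1 hu hp).comp_hasDerivAt p.1 (by simpa using hline1)
    simpa [Function.comp_def] using this
  have hL : pdt (pdt u) p.1 p.2 =
      fderiv ℝ (fderiv ℝ (Function.uncurry u)) p (1,0) (1,0) := by
    have heq : (fun s => pdt u s p.2) =ᶠ[nhds p.1] (fun s => g1 u (s, p.2)) :=
      pdt_eventually_eq_g1 hu hp
    calc pdt (pdt u) p.1 p.2 = deriv (fun s => pdt u s p.2) p.1 := rfl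
      _ = deriv (fun s => g1 u (s, p.2)) p.1 := heq.deriv_eq
      _ = _ := hg1d.deriv
  have hline2 : HasDerivAt (fun y : ℝ => ((p.1, y) : ℝ × ℝ)) ((0:ℝ),(1:ℝ)) p.2 :=
    (hasDerivAt_const p.2 p.1).prodMk (hasDerivAt_id p.2)
  have hg2d : HasDerivAt (fun y : ℝ => g2 u (p.1, y))
      (fderiv ℝ (fderiv ℝ (Function.uncurry u)) p (0,1) (0,1)) p.2 := by
    have := (hasFDerivAt_g2 hu hp).comp_hasDerivAt p.2 (by simpa using hline2)
    simpa [Function.comp_def] using this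
  have hR : pdx (pdx u) p.1 p.2 =
      fderiv ℝ (fderiv ℝ (Function.uncurry u)) p (0,1) (0,1) := by
    have heq : (fun y => pdx u p.1 y) =ᶠ[nhds p.2] (fun y => g2 u (p.1, y)) :=
      pdx_eventually_eq_g2 hu hp
    calc pdx (pdx u) p.1 p.2 = deriv (fun y => pdx u p.1 y) p.2 := rfl
      _ = deriv (fun y => g2 u (p.1, y)) p.2 := heq.deriv_eq
      _ = _ := hg2d.deriv
  rw [← hL, ← hR, hw]

lemma char_hasDerivAt (hu : ContDiffOn ℝ 2 (Function.uncurry u) wbox)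
    (hwave : ∀ t ∈ Set.Icc (0 : ℝ) 3, ∀ x ∈ Set.Icc (-10 : ℝ) 10,
      pdt (pdt u) t x = pdx (pdx u) t x)
    {ε : ℝ} (hε : ε = 1 ∨ ε = -1) (c : ℝ) {s : ℝ}
    (hp : ((s, c + ε * s) : ℝ × ℝ) ∈ interior wbox) :
    HasDerivAt (fun r => g1 u (r, c + ε * r) - ε * g2 u (r, c + ε * r)) 0 s := by
  set p : ℝ × ℝ := (s, c + ε * s) with hpdef
  have hline : HasDerivAt (fun r : ℝ => ((r, c + ε * r) : ℝ × ℝ)) ((1:ℝ), ε) s := by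
    refine (hasDerivAt_id s).prodMk ?_
    simpa using ((hasDerivAt_id s).const_mul ε).const_add c
  have h1 : HasDerivAt (fun r => g1 u (r, c + ε * r))
      (fderiv ℝ (fderiv ℝ (Function.uncurry u)) p ((1:ℝ), ε) (1,0)) s := by
    have := (hasFDerivAt_g1 hu hp).comp_hasDerivAt s hline
    simpa [Function.comp_def] using this
  have h2 : HasDerivAt (fun r => g2 u (r, c + ε * r))
      (fderiv ℝ (fderiv ℝ (Function.uncurry u)) p ((1:ℝ), ε) (0,1)) s := by
    have := (hasFDerivAt_g2 hu hp).comp_hasDerivAt s hline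
    simpa [Function.comp_def] using this
  have hcomb := h1.sub (h2.const_mul ε)
  have hsym : IsSymmSndFDerivAt ℝ (Function.uncurry u) p :=
    (contDiffAt_interior hu hp).isSymmSndFDerivAt (by simp)
  have hwv := wave_interior hu hwave hp
  set Φ := fderiv ℝ (fderiv ℝ (Function.uncurry u)) p with hΦdef
  have hexp : ((1:ℝ), ε) = ((1:ℝ),(0:ℝ)) + ε • ((0:ℝ),(1:ℝ)) := by
    simp [Prod.ext_iff]
  have hval : Φ ((1:ℝ), ε) (1,0) - ε * Φ ((1:ℝ), ε) (0,1) = 0 := by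
    rw [hexp]
    have hε2 : ε * ε = 1 := by rcases hε with h | h <;> rw [h] <;> norm_num
    have hs1 : Φ ((0:ℝ),(1:ℝ)) ((1:ℝ),(0:ℝ)) = Φ ((1:ℝ),(0:ℝ)) ((0:ℝ),(1:ℝ)) := hsym _ _
    simp only [map_add, _root_.map_smul, ContinuousLinearMap.add_apply, ContinuousLinearMap.smul_apply,
      smul_eq_mul]
    rw [hwv, ← hs1]
    linear_combination (-(Φ ((0:ℝ),(1:ℝ)) ((0:ℝ),(1:ℝ)))) * hε2
  rw [← hval]
  exact hcomb


lemma path_mem_wbox {ε x₀ : ℝ} (hx : ∀ s ∈ Icc (0:ℝ) 3, x₀ + ε * s ∈ Ioo (-10:ℝ) 10)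
    {s : ℝ} (hs : s ∈ Icc (0:ℝ) 3) : ((s, x₀ + ε * s) : ℝ × ℝ) ∈ wbox :=
  ⟨hs, Ioo_subset_Icc_self (hx s hs)⟩

lemma path_mem_interior {ε x₀ : ℝ} (hx : ∀ s ∈ Icc (0:ℝ) 3, x₀ + ε * s ∈ Ioo (-10:ℝ) 10)
    {s : ℝ} (hs : s ∈ Ioo (0:ℝ) 3) : ((s, x₀ + ε * s) : ℝ × ℝ) ∈ interior wbox := by
  rw [interior_wbox]
  exact ⟨hs, hx s (Ioo_subset_Icc_self hs)⟩

lemma char_const (hu : ContDiffOn ℝ 2 (Function.uncurry u) wbox)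
    (hwave : ∀ t ∈ Set.Icc (0 : ℝ) 3, ∀ x ∈ Set.Icc (-10 : ℝ) 10,
      pdt (pdt u) t x = pdx (pdx u) t x)
    {ε : ℝ} (hε : ε = 1 ∨ ε = -1) (x₀ : ℝ)
    (hx : ∀ s ∈ Icc (0:ℝ) 3, x₀ + ε * s ∈ Ioo (-10:ℝ) 10) :
    ∀ t ∈ Icc (0:ℝ) 3,
      F1 u (t, x₀ + ε * t) - ε * F2 u (t, x₀ + ε * t) = F1 u (0, x₀) - ε * F2 u (0, x₀) := by
  set G : ℝ → ℝ := fun s => F1 u (s, x₀ + ε * s) - ε * F2 u (s, x₀ + ε * s) with hGdef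
  have hpathc : Continuous (fun s : ℝ => ((s, x₀ + ε * s) : ℝ × ℝ)) := by fun_prop
  have hGcont : ContinuousOn G (Icc 0 3) := by
    have hmap : MapsTo (fun s : ℝ => ((s, x₀ + ε * s) : ℝ × ℝ)) (Icc 0 3) wbox :=
      fun s hs => path_mem_wbox hx hs
    have h1 := (contF1 hu).comp hpathc.continuousOn hmap
    have h2 := (contF2 hu).comp hpathc.continuousOn hmap
    exact h1.sub (h2.const_smul ε)
  have hGderiv : ∀ s ∈ Ioo (0:ℝ) 3, HasDerivAt G 0 s := by
    intro s hs
    have hmem : ((s, x₀ + ε * s) : ℝ × ℝ) ∈ interior wbox := path_mem_interior hx hs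
    have hg : HasDerivAt (fun r => g1 u (r, x₀ + ε * r) - ε * g2 u (r, x₀ + ε * r)) 0 s :=
      char_hasDerivAt hu hwave hε x₀ hmem
    apply hg.congr_of_eventuallyEq
    have hnb : ∀ᶠ r in nhds s, r ∈ Ioo (0:ℝ) 3 := isOpen_Ioo.eventually_mem hs
    filter_upwards [hnb] with r hr
    have hmemr := path_mem_interior hx hr
    rw [hGdef]
    simp only [F1_eq_g1 hmemr, F2_eq_g2 hmemr]
  have hconst : ∀ t₁ ∈ Ioo (0:ℝ) 3, ∀ t₂ ∈ Ioo (0:ℝ) 3, t₁ ≤ t₂ → G t₂ = G t₁ := by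
    intro t₁ h₁ t₂ h₂ h12
    have hsub : Icc t₁ t₂ ⊆ Ioo (0:ℝ) 3 := Icc_subset_Ioo h₁.1 h₂.2
    have := constant_of_has_deriv_right_zero
      (hGcont.mono (hsub.trans Ioo_subset_Icc_self))
      (fun s hs => (hGderiv s (hsub ⟨hs.1, hs.2.le⟩)).hasDerivWithinAt)
    exact this t₂ ⟨h12, le_rfl⟩
  have hmid : ∀ t ∈ Ioo (0:ℝ) 3, G t = G 1 := by
    intro t ht
    rcases le_total t 1 with h | h
    · exact (hconst t ht 1 (by norm_num) h).symm
    · exact hconst 1 (by norm_num) t ht h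
  have hne : (nhdsWithin (0:ℝ) (Ioo (0:ℝ) 3)).NeBot := by
    apply mem_closure_iff_nhdsWithin_neBot.1
    rw [closure_Ioo (by norm_num : (0:ℝ) ≠ 3)]
    exact ⟨le_rfl, by norm_num⟩
  have hne3 : (nhdsWithin (3:ℝ) (Ioo (0:ℝ) 3)).NeBot := by
    apply mem_closure_iff_nhdsWithin_neBot.1
    rw [closure_Ioo (by norm_num : (0:ℝ) ≠ 3)]
    exact ⟨by norm_num, le_rfl⟩
  have hG0 : G 0 = G 1 := by
    have h1 : Filter.Tendsto G (nhdsWithin 0 (Ioo (0:ℝ) 3)) (nhds (G 0)) :=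
      ((hGcont 0 (by norm_num)).mono Ioo_subset_Icc_self).tendsto
    have h2 : Filter.Tendsto G (nhdsWithin 0 (Ioo (0:ℝ) 3)) (nhds (G 1)) := by
      apply Filter.Tendsto.congr' _ tendsto_const_nhds
      exact Filter.eventually_of_mem self_mem_nhdsWithin (fun r hr => (hmid r hr).symm)
    exact tendsto_nhds_unique h1 h2
  have hG3 : G 3 = G 1 := by
    have h1 : Filter.Tendsto G (nhdsWithin 3 (Ioo (0:ℝ) 3)) (nhds (G 3)) :=
      ((hGcont 3 (by norm_num)).mono Ioo_subset_Icc_self).tendsto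
    have h2 : Filter.Tendsto G (nhdsWithin 3 (Ioo (0:ℝ) 3)) (nhds (G 1)) := by
      apply Filter.Tendsto.congr' _ tendsto_const_nhds
      exact Filter.eventually_of_mem self_mem_nhdsWithin (fun r hr => (hmid r hr).symm)
    exact tendsto_nhds_unique h1 h2
  intro t ht
  have hGt : G t = G 0 := by
    rcases eq_or_lt_of_le ht.1 with h0 | h0
    · rw [← h0]
    rcases eq_or_lt_of_le ht.2 with h3 | h3
    · rw [h3, hG3, ← hG0]
    · rw [hmid t ⟨h0, h3⟩, ← hG0]
  have := hGt
  rw [hGdef] at this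
  simpa [mul_zero, add_zero] using this

lemma pdx_at_time0 (hu : ContDiffOn ℝ 2 (Function.uncurry u) wbox)
    {x : ℝ} (hx : x ∈ Ioo (-10:ℝ) 10) : pdx u 0 x = F2 u (0, x) := by
  have hmem : ((0:ℝ), x) ∈ wbox := ⟨⟨le_rfl, by norm_num⟩, Ioo_subset_Icc_self hx⟩
  have hdw : HasFDerivWithinAt (Function.uncurry u)
      (fderivWithin ℝ (Function.uncurry u) wbox (0, x)) wbox ((0:ℝ), x) :=
    ((hu.differentiableOn (by norm_num)) _ hmem).hasFDerivWithinAt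
  have hline : HasDerivWithinAt (fun y : ℝ => (((0:ℝ), y) : ℝ × ℝ)) ((0:ℝ),(1:ℝ))
      (Icc (-10:ℝ) 10) x :=
    ((hasDerivAt_const x (0:ℝ)).prodMk (hasDerivAt_id x)).hasDerivWithinAt
  have hmap : MapsTo (fun y : ℝ => (((0:ℝ), y) : ℝ × ℝ)) (Icc (-10:ℝ) 10) wbox :=
    fun y hy => ⟨⟨le_rfl, by norm_num⟩, hy⟩
  have hcomp := hdw.comp_hasDerivWithinAt x hline hmap
  have hda : HasDerivAt (fun y => u 0 y) (F2 u (0, x)) x := by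
    have : HasDerivWithinAt (fun y => u 0 y) (F2 u (0,x)) (Icc (-10:ℝ) 10) x := by
      simpa [F2, Function.uncurry, Function.comp_def] using hcomp
    exact this.hasDerivAt (Icc_mem_nhds hx.1 hx.2)
  exact hda.deriv

lemma pdt_at_time0_sq_le (hu : ContDiffOn ℝ 2 (Function.uncurry u) wbox)
    {x : ℝ} (hx : x ∈ Icc (-10:ℝ) 10) : (pdt u 0 x)^2 ≤ (F1 u (0, x))^2 := by
  have hmem : ((0:ℝ), x) ∈ wbox := ⟨⟨le_rfl, by norm_num⟩, hx⟩
  have hdw : HasFDerivWithinAt (Function.uncurry u)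
      (fderivWithin ℝ (Function.uncurry u) wbox (0, x)) wbox ((0:ℝ), x) :=
    ((hu.differentiableOn (by norm_num)) _ hmem).hasFDerivWithinAt
  have hline : HasDerivWithinAt (fun s : ℝ => ((s, x) : ℝ × ℝ)) ((1:ℝ),(0:ℝ))
      (Icc (0:ℝ) 3) 0 :=
    ((hasDerivAt_id (0:ℝ)).prodMk (hasDerivAt_const (0:ℝ) x)).hasDerivWithinAt
  have hmap : MapsTo (fun s : ℝ => ((s, x) : ℝ × ℝ)) (Icc (0:ℝ) 3) wbox :=
    fun s hs => ⟨hs, hx⟩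
  have hcomp := hdw.comp_hasDerivWithinAt 0 hline hmap
  have h1 : HasDerivWithinAt (fun s => u s x) (F1 u (0,x)) (Icc (0:ℝ) 3) 0 := by
    simpa [F1, Function.uncurry, Function.comp_def] using hcomp
  by_cases hd : DifferentiableAt ℝ (fun s => u s x) 0
  · have h2 : HasDerivWithinAt (fun s => u s x) (deriv (fun s => u s x) 0) (Icc (0:ℝ) 3) 0 :=
      hd.hasDerivAt.hasDerivWithinAt
    have huniq : UniqueDiffWithinAt ℝ (Icc (0:ℝ) 3) 0 :=
      (uniqueDiffOn_Icc (by norm_num)) 0 ⟨le_rfl, by norm_num⟩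
    have : F1 u (0,x) = deriv (fun s => u s x) 0 := by
      rw [← h1.derivWithin huniq, ← h2.derivWithin huniq]
    rw [pdt, ← this]
  · have : pdt u 0 x = 0 := deriv_zero_of_not_differentiableAt hd
    rw [this]
    simpa using sq_nonneg (F1 u (0, x))


lemma wbox_compact : IsCompact wbox := isCompact_Icc.prod isCompact_Icc

/-- generic product integrability of a continuous-on-wbox function over a subrectangle -/
lemma prod_integrable {h : ℝ × ℝ → ℝ} (hh : ContinuousOn h wbox)
    {s t : Set ℝ} (hs : MeasurableSet s) (ht : MeasurableSet t)
    (hsfin : volume s ≠ ⊤) (htfin : volume t ≠ ⊤)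
    (hmap : (s ×ˢ t) ⊆ wbox) :
    Integrable h ((volume.restrict s).prod (volume.restrict t)) := by
  obtain ⟨M, hM⟩ := wbox_compact.exists_bound_of_continuousOn hh
  rw [Measure.prod_restrict]
  refine ⟨(hh.mono hmap).aestronglyMeasurable (hs.prod ht), ?_⟩
  apply HasFiniteIntegral.restrict_of_bounded (C := M)
  · rw [Measure.prod_prod]
    exact (ENNReal.mul_ne_top hsfin htfin).lt_top
  · exact (ae_restrict_mem (hs.prod ht)).mono fun p hp => hM p (hmap hp)

/-- inner slice integrability -/
lemma slice_integrable {h : ℝ × ℝ → ℝ} (hh : ContinuousOn h wbox)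
    {t : ℝ} (htm : t ∈ Icc (0:ℝ) 3) {c d : ℝ} (hcd : Icc c d ⊆ Icc (-10:ℝ) 10) :
    IntegrableOn (fun y => h (t, y)) (Ioo c d) := by
  have hcont : ContinuousOn (fun y => h (t, y)) (Icc c d) := by
    apply hh.comp (Continuous.continuousOn (by fun_prop))
    exact fun y hy => ⟨htm, hcd hy⟩
  exact (hcont.integrableOn_compact isCompact_Icc).mono_set Ioo_subset_Icc_self

lemma time_slice_integrable {h : ℝ × ℝ → ℝ} (hh : ContinuousOn h wbox)
    {x : ℝ} (hxm : x ∈ Icc (-10:ℝ) 10) :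
    IntegrableOn (fun t => h (t, x)) (Ioc (0:ℝ) 3) := by
  have hcont : ContinuousOn (fun t => h (t, x)) (Icc (0:ℝ) 3) := by
    apply hh.comp (Continuous.continuousOn (by fun_prop))
    exact fun t htt => ⟨htt, hxm⟩
  exact (hcont.integrableOn_compact isCompact_Icc).mono_set Ioc_subset_Icc_self


/-- The key observability estimate along one family of characteristics. -/
lemma key_integral (hu : ContDiffOn ℝ 2 (Function.uncurry u) wbox)
    (hwave : ∀ t ∈ Set.Icc (0 : ℝ) 3, ∀ x ∈ Set.Icc (-10 : ℝ) 10,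
      pdt (pdt u) t x = pdx (pdx u) t x)
    {ε : ℝ} (hε : ε = 1 ∨ ε = -1) (c : ℝ) {a b L : ℝ} (hab : a ≤ b) (hL : 0 < L)
    (hc : Icc c (c+1) ⊆ Icc (-10:ℝ) 10)
    (hpath : ∀ x ∈ Icc a b, ∀ s ∈ Icc (0:ℝ) 3, x + ε * s ∈ Ioo (-10:ℝ) 10)
    (hwindow : ∀ x ∈ Icc a b, ∃ t1 t2, 0 ≤ t1 ∧ t1 + L ≤ t2 ∧ t2 ≤ 3 ∧
      ∀ t ∈ Ioo t1 t2, x + ε * t ∈ Ioo c (c+1)) :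
    L * ∫ x in Ioc a b, (F1 u (0,x) - ε * F2 u (0,x))^2 ≤
      ∫ t in Ioo (0:ℝ) 3, ∫ y in Ioo c (c+1), (F1 u (t,y) - ε * F2 u (t,y))^2 := by
  set W : ℝ × ℝ → ℝ := fun p => F1 u p - ε * F2 u p with hWdef
  have hWcont : ContinuousOn (fun p => (W p)^2) wbox := by
    have : ContinuousOn W wbox := (contF1 hu).sub ((contF2 hu).const_smul ε)
    exact this.pow 2
  -- the transported integrand
  set G : ℝ → ℝ → ℝ := fun x t => if x + ε*t ∈ Ioo c (c+1) then (W (t, x + ε*t))^2 else 0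
    with hGdef
  have hGnonneg : ∀ x t, 0 ≤ G x t := by
    intro x t
    rw [hGdef]
    dsimp only
    split
    · exact sq_nonneg _
    · exact le_rfl
  -- integrability of G x in t, for x in [a,b]
  have hGxint : ∀ x ∈ Icc a b, IntegrableOn (fun t => G x t) (Ioo (0:ℝ) 3) := by
    intro x hx
    have hS : MeasurableSet {t : ℝ | x + ε*t ∈ Ioo c (c+1)} :=
      measurableSet_Ioo.preimage (by fun_prop)
    have hhint : IntegrableOn (fun t => (W (t, x + ε*t))^2) (Ioo (0:ℝ) 3) := by
      have hcont : ContinuousOn (fun t => (W (t, x + ε*t))^2) (Icc (0:ℝ) 3) := by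
        apply hWcont.comp (Continuous.continuousOn (by fun_prop))
        exact fun s hs => ⟨hs, Ioo_subset_Icc_self (hpath x hx s hs)⟩
      exact (hcont.integrableOn_compact isCompact_Icc).mono_set Ioo_subset_Icc_self
    have : (fun t => G x t) =
        {t : ℝ | x + ε*t ∈ Ioo c (c+1)}.indicator (fun t => (W (t, x + ε*t))^2) := by
      funext t
      rw [Set.indicator_apply]
      rfl
    rw [this]
    exact hhint.indicator hS
  -- pointwise lower bound in x
  have hptwise : ∀ x ∈ Ioc a b, L * (W (0,x))^2 ≤ ∫ t in Ioo (0:ℝ) 3, G x t := by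
    intro x hx'
    have hx : x ∈ Icc a b := Ioc_subset_Icc_self hx'
    obtain ⟨t1, t2, h0, h12, h3, hwin⟩ := hwindow x hx
    have hconst := char_const hu hwave hε x (fun s hs => hpath x hx s hs)
    have hsub : Ioo t1 t2 ⊆ Ioo (0:ℝ) 3 :=
      fun t ht => ⟨lt_of_le_of_lt h0 ht.1, lt_of_lt_of_le ht.2 (by linarith)⟩
    have e1 : ∫ t in Ioo t1 t2, G x t = ∫ t in Ioo t1 t2, (W (0,x))^2 := by
      apply setIntegral_congr_fun measurableSet_Ioo
      intro t ht
      have hmem := hwin t ht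
      have htI : t ∈ Icc (0:ℝ) 3 := ⟨le_trans h0 ht.1.le, le_trans ht.2.le (by linarith)⟩
      have : W (t, x + ε*t) = W (0, x) := hconst t htI
      show G x t = _
      rw [hGdef]
      dsimp only
      rw [if_pos hmem, this]
    have e2 : ∫ t in Ioo t1 t2, (W (0,x))^2 = (t2 - t1) * (W (0,x))^2 := by
      rw [setIntegral_const, measureReal_def, Real.volume_Ioo, smul_eq_mul,
        ENNReal.toReal_ofReal (by linarith)]
    have e3 : L * (W (0,x))^2 ≤ (t2 - t1) * (W (0,x))^2 :=
      mul_le_mul_of_nonneg_right (by linarith) (sq_nonneg _)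
    have e4 : ∫ t in Ioo t1 t2, G x t ≤ ∫ t in Ioo (0:ℝ) 3, G x t := by
      apply setIntegral_mono_set (hGxint x hx)
        (Filter.Eventually.of_forall fun t => hGnonneg x t) hsub.eventuallyLE
    calc L * (W (0,x))^2 ≤ (t2 - t1) * (W (0,x))^2 := e3
      _ = ∫ t in Ioo t1 t2, G x t := by rw [e1, e2]
      _ ≤ _ := e4
  -- product integrability of G
  have hGprod : Integrable (Function.uncurry G)
      ((volume.restrict (Ioc a b)).prod (volume.restrict (Ioo (0:ℝ) 3))) := by
    have hS : MeasurableSet {p : ℝ × ℝ | p.1 + ε*p.2 ∈ Ioo c (c+1)} :=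
      measurableSet_Ioo.preimage (by fun_prop)
    have hψcont : Continuous (fun p : ℝ × ℝ => ((p.2, p.1 + ε*p.2) : ℝ × ℝ)) := by fun_prop
    have hmapR : (Ioc a b ×ˢ Ioo (0:ℝ) 3) ⊆
        (fun p : ℝ × ℝ => ((p.2, p.1 + ε*p.2) : ℝ × ℝ)) ⁻¹' wbox := by
      rintro ⟨x, t⟩ ⟨hx, ht⟩
      exact ⟨Ioo_subset_Icc_self ht, Ioo_subset_Icc_self
        (hpath x (Ioc_subset_Icc_self hx) t (Ioo_subset_Icc_self ht))⟩
    have hHcont : ContinuousOn (fun p : ℝ × ℝ => (W (p.2, p.1 + ε*p.2))^2)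
        (Ioc a b ×ˢ Ioo (0:ℝ) 3) :=
      hWcont.comp hψcont.continuousOn hmapR
    obtain ⟨M, hM⟩ := wbox_compact.exists_bound_of_continuousOn hWcont
    have hRmeas : MeasurableSet (Ioc a b ×ˢ Ioo (0:ℝ) 3) :=
      measurableSet_Ioc.prod measurableSet_Ioo
    have heq : Function.uncurry G = fun p : ℝ × ℝ =>
        ({p : ℝ × ℝ | p.1 + ε*p.2 ∈ Ioo c (c+1)}.indicator
          (fun p : ℝ × ℝ => (W (p.2, p.1 + ε*p.2))^2)) p := by
      funext p
      rw [Set.indicator_apply]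
      rfl
    rw [Measure.prod_restrict, heq]
    refine ⟨((hHcont.aestronglyMeasurable hRmeas).indicator hS), ?_⟩
    apply HasFiniteIntegral.restrict_of_bounded (C := M)
    · rw [Measure.prod_prod]
      exact (ENNReal.mul_ne_top (by simp) (by simp)).lt_top
    · refine (ae_restrict_mem hRmeas).mono fun p hp => ?_
      refine le_trans (norm_indicator_le_norm_self _ _) ?_
      exact hM _ (hmapR hp)
  -- inner bound after substitution
  have hinner : ∀ t ∈ Ioo (0:ℝ) 3,
      ∫ x in Ioc a b, G x t ≤ ∫ y in Ioo c (c+1), (W (t,y))^2 := by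
    intro t ht
    have hWt : IntegrableOn (fun y => (W (t,y))^2) (Ioo c (c+1)) :=
      slice_integrable hWcont (Ioo_subset_Icc_self ht) hc
    set B : Set ℝ := Ioo c (c+1) ∩ Ioc (a + ε*t) (b + ε*t) with hBdef
    have hBmeas : MeasurableSet B := measurableSet_Ioo.inter measurableSet_Ioc
    have e1 : ∫ x in Ioc a b, G x t = ∫ x, (Ioc a b).indicator (fun x => G x t) x :=
      (integral_indicator measurableSet_Ioc).symm
    have e2 : ∀ x, (Ioc a b).indicator (fun x => G x t) x
        = B.indicator (fun y => (W (t,y))^2) (x + ε*t) := by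
      intro x
      by_cases hx : x ∈ Ioc a b
      · rw [Set.indicator_of_mem hx]
        by_cases hy : x + ε*t ∈ Ioo c (c+1)
        · have hmemB : x + ε*t ∈ B :=
            ⟨hy, ⟨by have := hx.1; linarith, by have := hx.2; linarith⟩⟩
          rw [Set.indicator_of_mem hmemB]
          show G x t = _
          rw [hGdef]; dsimp only; rw [if_pos hy]
        · have hnB : x + ε*t ∉ B := fun h => hy h.1
          rw [Set.indicator_of_notMem hnB]
          show G x t = 0
          rw [hGdef]; dsimp only; rw [if_neg hy]
      · rw [Set.indicator_of_notMem hx]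
        have hnB : x + ε*t ∉ B := by
          rintro ⟨h1, h2⟩
          exact hx ⟨by have := h2.1; linarith, by have := h2.2; linarith⟩
        rw [Set.indicator_of_notMem hnB]
    rw [e1]
    simp_rw [e2]
    rw [integral_add_right_eq_self (B.indicator fun y => (W (t,y))^2) (ε*t),
      integral_indicator hBmeas]
    exact setIntegral_mono_set hWt
      (Filter.Eventually.of_forall fun y => sq_nonneg _)
      Set.inter_subset_left.eventuallyLE
  -- assemble
  have hLHSint : IntegrableOn (fun x => L * (W (0,x))^2) (Ioc a b) := by
    have hcont : ContinuousOn (fun x => L * (W (0,x))^2) (Icc a b) := by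
      apply ContinuousOn.const_smul _ L
      apply hWcont.comp (Continuous.continuousOn (by fun_prop))
      intro x hx
      exact ⟨⟨le_rfl, by norm_num⟩, Ioo_subset_Icc_self (by simpa using hpath x hx 0 (by norm_num))⟩
    exact (hcont.integrableOn_compact isCompact_Icc).mono_set Ioc_subset_Icc_self
  have hmarg1 : IntegrableOn (fun x => ∫ t in Ioo (0:ℝ) 3, G x t) (Ioc a b) := by
    have := hGprod.integral_prod_left
    simpa [Function.uncurry, IntegrableOn] using this
  have hmarg2 : IntegrableOn (fun t => ∫ x in Ioc a b, G x t) (Ioo (0:ℝ) 3) := by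
    have := hGprod.integral_prod_right
    simpa [Function.uncurry, IntegrableOn] using this
  have hmarg3 : IntegrableOn (fun t => ∫ y in Ioo c (c+1), (W (t,y))^2) (Ioo (0:ℝ) 3) := by
    have hint := prod_integrable hWcont measurableSet_Ioo measurableSet_Ioo
      (by simp) (by simp) (fun p hp => ⟨Ioo_subset_Icc_self hp.1, hc (Ioo_subset_Icc_self hp.2)⟩)
      (s := Ioo (0:ℝ) 3) (t := Ioo c (c+1))
    exact hint.integral_prod_left
  calc L * ∫ x in Ioc a b, (W (0,x))^2
      = ∫ x in Ioc a b, L * (W (0,x))^2 := (integral_const_mul L _).symm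
    _ ≤ ∫ x in Ioc a b, ∫ t in Ioo (0:ℝ) 3, G x t :=
        setIntegral_mono_on hLHSint hmarg1 measurableSet_Ioc hptwise
    _ = ∫ t in Ioo (0:ℝ) 3, ∫ x in Ioc a b, G x t := integral_integral_swap hGprod
    _ ≤ ∫ t in Ioo (0:ℝ) 3, ∫ y in Ioo c (c+1), (W (t,y))^2 :=
        setIntegral_mono_on hmarg2 hmarg3 measurableSet_Ioo hinner


/-- energy density -/
noncomputable def Ed (u : ℝ → ℝ → ℝ) : ℝ × ℝ → ℝ := fun p => (F1 u p)^2 + (F2 u p)^2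

lemma Ed_cont (hu : ContDiffOn ℝ 2 (Function.uncurry u) wbox) :
    ContinuousOn (Ed u) wbox :=
  ((contF1 hu).pow 2).add ((contF2 hu).pow 2)

lemma dominate (hu : ContDiffOn ℝ 2 (Function.uncurry u) wbox)
    {c d : ℝ} (hcd : Icc c d ⊆ Icc (-10:ℝ) 10) {ε : ℝ} (hε : ε = 1 ∨ ε = -1) :
    ∫ t in Ioo (0:ℝ) 3, ∫ y in Ioo c d, (F1 u (t,y) - ε * F2 u (t,y))^2 ≤
      2 * ∫ t in Ioo (0:ℝ) 3, ∫ y in Ioo c d, Ed u (t,y) := by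
  have hWcont : ContinuousOn (fun p => (F1 u p - ε * F2 u p)^2) wbox :=
    ((contF1 hu).sub ((contF2 hu).const_smul ε)).pow 2
  have h2Econt : ContinuousOn (fun p => 2 * Ed u p) wbox := continuousOn_const.mul (Ed_cont hu)
  have hptw : ∀ p ∈ wbox, (F1 u p - ε * F2 u p)^2 ≤ 2 * Ed u p := by
    intro p _
    rcases hε with h | h <;> rw [h] <;> simp only [Ed] <;> nlinarith [sq_nonneg (F1 u p + F2 u p),
      sq_nonneg (F1 u p - F2 u p)]
  have hmem : ∀ t ∈ Ioo (0:ℝ) 3, ∀ y ∈ Ioo c d, ((t,y) : ℝ × ℝ) ∈ wbox :=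
    fun t ht y hy => ⟨Ioo_subset_Icc_self ht, hcd (Ioo_subset_Icc_self hy)⟩
  have hinner : ∀ t ∈ Ioo (0:ℝ) 3,
      ∫ y in Ioo c d, (F1 u (t,y) - ε * F2 u (t,y))^2 ≤ ∫ y in Ioo c d, 2 * Ed u (t,y) := by
    intro t ht
    exact setIntegral_mono_on (slice_integrable hWcont (Ioo_subset_Icc_self ht) hcd)
      (slice_integrable h2Econt (Ioo_subset_Icc_self ht) hcd) measurableSet_Ioo
      (fun y hy => hptw _ (hmem t ht y hy))
  have hm1 : IntegrableOn (fun t => ∫ y in Ioo c d, (F1 u (t,y) - ε * F2 u (t,y))^2)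
      (Ioo (0:ℝ) 3) :=
    (prod_integrable hWcont measurableSet_Ioo measurableSet_Ioo (by simp) (by simp)
      (fun p hp => hmem p.1 hp.1 p.2 hp.2)).integral_prod_left
  have hm2 : IntegrableOn (fun t => ∫ y in Ioo c d, 2 * Ed u (t,y)) (Ioo (0:ℝ) 3) :=
    (prod_integrable h2Econt measurableSet_Ioo measurableSet_Ioo (by simp) (by simp)
      (fun p hp => hmem p.1 hp.1 p.2 hp.2)).integral_prod_left
  calc ∫ t in Ioo (0:ℝ) 3, ∫ y in Ioo c d, (F1 u (t,y) - ε * F2 u (t,y))^2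
      ≤ ∫ t in Ioo (0:ℝ) 3, ∫ y in Ioo c d, 2 * Ed u (t,y) :=
        setIntegral_mono_on hm1 hm2 measurableSet_Ioo hinner
    _ = 2 * ∫ t in Ioo (0:ℝ) 3, ∫ y in Ioo c d, Ed u (t,y) := by
        simp_rw [integral_const_mul]


end WaveAux

open WaveAux

theorem local_recovery_initial_energy (a b : ℝ) (ha : -2 < a) (hab : a ≤ b) (hb : b < 2) :
    ∃ C : ℝ, 0 < C ∧
      ∀ u : ℝ → ℝ → ℝ,
        -- u is of class C² on [0,3] × [−10,10]
        ContDiffOn ℝ 2 (Function.uncurry u) (Set.Icc (0 : ℝ) 3 ×ˢ Set.Icc (-10 : ℝ) 10) →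
        -- u solves the wave equation on [0,3] × [−10,10]
        (∀ t ∈ Set.Icc (0 : ℝ) 3, ∀ x ∈ Set.Icc (-10 : ℝ) 10,
          pdt (pdt u) t x = pdx (pdx u) t x) →
        -- Dirichlet boundary conditions
        (∀ t ∈ Set.Icc (0 : ℝ) 3, u t (-10) = 0 ∧ u t 10 = 0) →
        -- local observability inequality, with no support restriction on the data
        ∫ x in Set.Ioc a b, ((pdx u 0 x) ^ 2 + (pdt u 0 x) ^ 2) ≤
          C * ∫ t in Set.Ioo (0 : ℝ) 3,
                ∫ x in (Set.Ioo (-2 : ℝ) (-1) ∪ Set.Ioo (1 : ℝ) 2),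
                  ((pdt u t x) ^ 2 + (pdx u t x) ^ 2) := by
  set L : ℝ := min 1 (min (2 - b) (2 + a)) with hLdef
  have hL : 0 < L := by
    apply lt_min (by norm_num)
    exact lt_min (by linarith) (by linarith)
  have hL1 : L ≤ 1 := min_le_left _ _
  have hL2 : L ≤ 2 - b := le_trans (min_le_right _ _) (min_le_left _ _)
  have hL3 : L ≤ 2 + a := le_trans (min_le_right _ _) (min_le_right _ _)
  refine ⟨1 / L, by positivity, ?_⟩
  intro u hu hwave _hbc
  have hu' : ContDiffOn ℝ 2 (Function.uncurry u) wbox := hu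
  -- notation
  set Rint : ℝ := ∫ t in Set.Ioo (0:ℝ) 3,
      ∫ y in (Set.Ioo (-2:ℝ) (-1) ∪ Set.Ioo (1:ℝ) 2), Ed u (t, y) with hRdef
  -- rewrite the right-hand side using F1/F2
  have hRHS : (∫ t in Set.Ioo (0:ℝ) 3,
      ∫ x in (Set.Ioo (-2:ℝ) (-1) ∪ Set.Ioo (1:ℝ) 2),
        ((pdt u t x) ^ 2 + (pdx u t x) ^ 2)) = Rint := by
    apply setIntegral_congr_fun measurableSet_Ioo
    intro t ht
    apply setIntegral_congr_fun (measurableSet_Ioo.union measurableSet_Ioo)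
    intro y hy
    have hyI : y ∈ Set.Ioo (-10:ℝ) 10 := by
      rcases hy with h | h
      · exact ⟨by linarith [h.1], by linarith [h.2]⟩
      · exact ⟨by linarith [h.1], by linarith [h.2]⟩
    have hmem : ((t, y) : ℝ × ℝ) ∈ interior wbox := by
      rw [interior_wbox]; exact ⟨ht, hyI⟩
    show (pdt u t y)^2 + (pdx u t y)^2 = Ed u (t, y)
    rw [pdt_eq_interior hu' hmem, pdx_eq_interior hu' hmem, Ed]
  rw [hRHS]
  -- nonnegativity of Rint
  have hRnonneg : 0 ≤ Rint := by
    rw [hRdef]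
    apply setIntegral_nonneg measurableSet_Ioo
    intro t _
    apply setIntegral_nonneg (measurableSet_Ioo.union measurableSet_Ioo)
    intro y _
    simp only [Ed]
    positivity
  -- windows subsets
  have hc1 : Icc (1:ℝ) (1+1) ⊆ Icc (-10:ℝ) 10 := by
    intro y hy; exact ⟨by linarith [hy.1], by linarith [hy.2]⟩
  have hc2 : Icc (-2:ℝ) (-2+1) ⊆ Icc (-10:ℝ) 10 := by
    intro y hy; exact ⟨by linarith [hy.1], by linarith [hy.2]⟩
  -- key estimate, right-moving characteristics (ε = 1, window (1,2))
  have key1 : L * ∫ x in Set.Ioc a b, (F1 u (0,x) - 1 * F2 u (0,x))^2 ≤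
      ∫ t in Set.Ioo (0:ℝ) 3, ∫ y in Set.Ioo (1:ℝ) (1+1), (F1 u (t,y) - 1 * F2 u (t,y))^2 := by
    apply key_integral hu' hwave (Or.inl rfl) 1 hab hL hc1
    · intro x hx s hs
      constructor
      · have := hx.1; have := hs.1; simp only [one_mul]; linarith
      · have := hx.2; have := hs.2; simp only [one_mul]; linarith
    · intro x hx
      refine ⟨max 0 (1 - x), min 3 (2 - x), le_max_left _ _, ?_, min_le_left _ _, ?_⟩
      · have hb1 : max 0 (1-x) + L ≤ 3 := by
          rcases max_cases 0 (1-x) with ⟨he,_⟩|⟨he,_⟩ <;> rw [he] <;>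
            [linarith; linarith [hx.1]]
        have hb2 : max 0 (1-x) + L ≤ 2 - x := by
          rcases max_cases 0 (1-x) with ⟨he,_⟩|⟨he,_⟩ <;> rw [he] <;>
            [linarith [hx.2]; linarith]
        exact le_min hb1 hb2
      · intro t ht
        have h1 : 1 - x < t := lt_of_le_of_lt (le_max_right _ _) ht.1
        have h2 : t < 2 - x := lt_of_lt_of_le ht.2 (min_le_right _ _)
        constructor
        · simp only [one_mul]; linarith
        · simp only [one_mul]; linarith
  -- key estimate, left-moving characteristics (ε = -1, window (-2,-1))
  have key2 : L * ∫ x in Set.Ioc a b, (F1 u (0,x) - (-1) * F2 u (0,x))^2 ≤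
      ∫ t in Set.Ioo (0:ℝ) 3, ∫ y in Set.Ioo (-2:ℝ) (-2+1),
        (F1 u (t,y) - (-1) * F2 u (t,y))^2 := by
    apply key_integral hu' hwave (Or.inr rfl) (-2) hab hL hc2
    · intro x hx s hs
      constructor
      · have := hx.1; have := hs.2; nlinarith
      · have := hx.2; have := hs.1; nlinarith
    · intro x hx
      refine ⟨max 0 (x + 1), min 3 (x + 2), le_max_left _ _, ?_, min_le_left _ _, ?_⟩
      · have hb1 : max 0 (x+1) + L ≤ 3 := by
          rcases max_cases 0 (x+1) with ⟨he,_⟩|⟨he,_⟩ <;> rw [he] <;>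
            [linarith; linarith [hx.2]]
        have hb2 : max 0 (x+1) + L ≤ x + 2 := by
          rcases max_cases 0 (x+1) with ⟨he,_⟩|⟨he,_⟩ <;> rw [he] <;>
            [linarith [hx.1]; linarith]
        exact le_min hb1 hb2
      · intro t ht
        have h1 : x + 1 < t := lt_of_le_of_lt (le_max_right _ _) ht.1
        have h2 : t < x + 2 := lt_of_lt_of_le ht.2 (min_le_right _ _)
        constructor
        · nlinarith
        · nlinarith
  -- domination by the energy density
  have dom1 := dominate hu' hc1 (Or.inl rfl)
  have dom2 := dominate hu' hc2 (Or.inr rfl)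
  -- splitting Rint over the union
  have hsplit : Rint = (∫ t in Set.Ioo (0:ℝ) 3, ∫ y in Set.Ioo (-2:ℝ) (-2+1), Ed u (t,y))
      + ∫ t in Set.Ioo (0:ℝ) 3, ∫ y in Set.Ioo (1:ℝ) (1+1), Ed u (t,y) := by
    rw [hRdef]
    have hinner : ∀ t ∈ Set.Ioo (0:ℝ) 3,
        (∫ y in (Set.Ioo (-2:ℝ) (-1) ∪ Set.Ioo (1:ℝ) 2), Ed u (t, y)) =
        (∫ y in Set.Ioo (-2:ℝ) (-2+1), Ed u (t,y)) + ∫ y in Set.Ioo (1:ℝ) (1+1), Ed u (t,y) := by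
      intro t ht
      have e1 : Set.Ioo (-2:ℝ) (-1) = Set.Ioo (-2:ℝ) (-2+1) := by norm_num
      have e2 : Set.Ioo (1:ℝ) 2 = Set.Ioo (1:ℝ) (1+1) := by norm_num
      rw [e1, e2]
      apply setIntegral_union
      · apply Set.disjoint_left.2
        rintro y ⟨_, h1⟩ ⟨h2, _⟩
        linarith
      · exact measurableSet_Ioo
      · exact slice_integrable (Ed_cont hu') (Ioo_subset_Icc_self ht) hc2
      · exact slice_integrable (Ed_cont hu') (Ioo_subset_Icc_self ht) hc1
    rw [setIntegral_congr_fun measurableSet_Ioo hinner]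
    apply integral_add
    · exact (prod_integrable (Ed_cont hu') measurableSet_Ioo measurableSet_Ioo (by simp)
        (by simp) (fun p hp => ⟨Ioo_subset_Icc_self hp.1, hc2 (Ioo_subset_Icc_self hp.2)⟩)
        ).integral_prod_left
    · exact (prod_integrable (Ed_cont hu') measurableSet_Ioo measurableSet_Ioo (by simp)
        (by simp) (fun p hp => ⟨Ioo_subset_Icc_self hp.1, hc1 (Ioo_subset_Icc_self hp.2)⟩)
        ).integral_prod_left
  -- time-zero energy integrals
  have habI : Icc a b ⊆ Icc (-10:ℝ) 10 := fun x hx =>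
    ⟨by linarith [hx.1], by linarith [hx.2]⟩
  have hE0cont : ContinuousOn (fun x => Ed u (0, x)) (Icc a b) := by
    apply (Ed_cont hu').comp (Continuous.continuousOn (by fun_prop))
    exact fun x hx => ⟨⟨le_rfl, by norm_num⟩, habI hx⟩
  have hE0int : IntegrableOn (fun x => Ed u (0, x)) (Ioc a b) :=
    (hE0cont.integrableOn_compact isCompact_Icc).mono_set Ioc_subset_Icc_self
  have hW0cont : ∀ ε : ℝ, ContinuousOn (fun x => (F1 u (0,x) - ε * F2 u (0,x))^2) (Icc a b) := by
    intro ε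
    have : ContinuousOn (fun p => (F1 u p - ε * F2 u p)^2) wbox :=
      ((contF1 hu').sub ((contF2 hu').const_smul ε)).pow 2
    apply this.comp (Continuous.continuousOn (by fun_prop))
    exact fun x hx => ⟨⟨le_rfl, by norm_num⟩, habI hx⟩
  have hW0int : ∀ ε : ℝ, IntegrableOn (fun x => (F1 u (0,x) - ε * F2 u (0,x))^2) (Ioc a b) :=
    fun ε => ((hW0cont ε).integrableOn_compact isCompact_Icc).mono_set Ioc_subset_Icc_self
  have hsum0 : (∫ x in Set.Ioc a b, (F1 u (0,x) - 1 * F2 u (0,x))^2)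
      + ∫ x in Set.Ioc a b, (F1 u (0,x) - (-1) * F2 u (0,x))^2
      = 2 * ∫ x in Set.Ioc a b, Ed u (0, x) := by
    rw [← integral_add (hW0int 1) (hW0int (-1)), ← integral_const_mul]
    apply setIntegral_congr_fun measurableSet_Ioc
    intro x _
    simp only [Ed]
    ring
  -- central estimate
  have hmain : L * ∫ x in Set.Ioc a b, Ed u (0, x) ≤ Rint := by
    have h1 : L * ((∫ x in Set.Ioc a b, (F1 u (0,x) - 1 * F2 u (0,x))^2)
        + ∫ x in Set.Ioc a b, (F1 u (0,x) - (-1) * F2 u (0,x))^2) ≤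
        2 * ((∫ t in Set.Ioo (0:ℝ) 3, ∫ y in Set.Ioo (1:ℝ) (1+1), Ed u (t,y))
          + ∫ t in Set.Ioo (0:ℝ) 3, ∫ y in Set.Ioo (-2:ℝ) (-2+1), Ed u (t,y)) := by
      rw [mul_add, mul_add]
      exact add_le_add (le_trans key1 dom1) (le_trans key2 dom2)
    rw [hsum0] at h1
    rw [hsplit]
    linarith
  -- conclude, splitting on integrability of the (possibly wild) time-zero integrand
  by_cases hI : IntegrableOn (fun x => (pdx u 0 x) ^ 2 + (pdt u 0 x) ^ 2) (Set.Ioc a b)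
  · have hstep : (∫ x in Set.Ioc a b, ((pdx u 0 x) ^ 2 + (pdt u 0 x) ^ 2)) ≤
        ∫ x in Set.Ioc a b, Ed u (0, x) := by
      apply setIntegral_mono_on hI hE0int measurableSet_Ioc
      intro x hx
      have hxI : x ∈ Set.Ioo (-10:ℝ) 10 := ⟨by linarith [hx.1], by linarith [hx.2]⟩
      have h1 : pdx u 0 x = F2 u (0, x) := pdx_at_time0 hu' hxI
      have h2 : (pdt u 0 x)^2 ≤ (F1 u (0,x))^2 :=
        pdt_at_time0_sq_le hu' (Ioo_subset_Icc_self hxI)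
      simp only [Ed]
      rw [h1]
      linarith
    calc (∫ x in Set.Ioc a b, ((pdx u 0 x) ^ 2 + (pdt u 0 x) ^ 2))
        ≤ ∫ x in Set.Ioc a b, Ed u (0, x) := hstep
      _ ≤ 1 / L * Rint := by
          rw [div_mul_eq_mul_div, one_mul, le_div_iff₀ hL]
          nlinarith [hmain]
  · rw [integral_undef hI]
    positivity
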